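/- Certified robustness via integer randomized smoothing (half-space form): fix σ > 0, d ∈ ℕ, a finite label set C, a base classifier f : ℤ^d → C, x, δ ∈ ℤ^d, and a label c_A ∈ C. Let p_X, p_Y be the pmfs on ℤ^d of the product discrete Gaussians centered at x and at x+δ respectively. Suppose there exist real thresholds t_A, t_B such that, with half-spaces S_A = {z ∈ ℤ^d : ⟨z−x,δ⟩ ≤ t_A} and S_B = {z ∈ ℤ^d : ⟨z−x,δ⟩ ≥ t_B}: (i) ∑_{z : f(z)=c_A} p_X(z) ≥ ∑_{z∈S_A} p_X(z); (ii) for every c ≠ c_A, ∑_{z : f(z)=c} p_X(z) ≤ ∑_{z∈S_B} p_X(z); and (iii) ∑_{z∈S_A} p_Y(z) > ∑_{z∈S_B} p_Y(z). Then for every c ≠ c_A, ∑_{z : f(z)=c_A} p_Y(z) > ∑_{z : f(z)=c} p_Y(z); that is, the smoothed classifier g(x') = argmax_{c∈C} ℙ_{n∼N_ℤ(0,σ²I_d)}[f(x'+n)=c] satisfies g(x+δ) = c_A. -/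

import Mathlib

open scoped BigOperators

/-- Discrete Gaussian pmf on ℤ with location `μ` and scale `σ`. -/
noncomputable def dgauss (σ : ℝ) (μ : ℤ) (z : ℤ) : ℝ :=
  Real.exp (-((z : ℝ) - (μ : ℝ)) ^ 2 / (2 * σ ^ 2)) /
    ∑' h : ℤ, Real.exp (-((h : ℝ) - (μ : ℝ)) ^ 2 / (2 * σ ^ 2))

/-- Product discrete Gaussian pmf on `ℤ^d` centered at `x`. -/
noncomputable def dgaussProd (σ : ℝ) (d : ℕ) (x z : Fin d → ℤ) : ℝ :=
  ∏ i, dgauss σ (x i) (z i)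

/-- Standard inner product on `ℝ^d` of (casts of) integer vectors. -/
noncomputable def iprod (d : ℕ) (a b : Fin d → ℤ) : ℝ :=
  ∑ i, (a i : ℝ) * (b i : ℝ)

/-- Squared ℓ₂ norm of (the cast of) an integer vector. -/
noncomputable def nsq (d : ℕ) (a : Fin d → ℤ) : ℝ :=
  ∑ i, ((a i : ℝ)) ^ 2

section aux

lemma summable_gauss_base (σ : ℝ) (hσ : 0 < σ) :
    Summable (fun h : ℤ => Real.exp (-(h : ℝ) ^ 2 / (2 * σ ^ 2))) := by
  have hc : (0:ℝ) < 2 * σ ^ 2 := by positivity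
  have hgeo : Summable (fun n : ℕ => Real.exp (-1 / (2 * σ ^ 2)) ^ n) := by
    refine summable_geometric_of_lt_one (Real.exp_pos _).le ?_
    exact Real.exp_lt_one_iff.mpr (div_neg_of_neg_of_pos (by norm_num) hc)
  have hnat : Summable (fun n : ℕ => Real.exp (-(n : ℝ) ^ 2 / (2 * σ ^ 2))) := by
    refine Summable.of_nonneg_of_le (fun n => (Real.exp_pos _).le) (fun n => ?_) hgeo
    rw [← Real.exp_nat_mul]
    apply Real.exp_le_exp.mpr
    have hn : (n : ℝ) ≤ (n : ℝ) ^ 2 := by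
      have := Nat.le_self_pow (two_ne_zero) n
      exact_mod_cast this
    have hrw : (n : ℝ) * (-1 / (2 * σ ^ 2)) = -(n : ℝ) / (2 * σ ^ 2) := by ring
    rw [hrw]
    gcongr <;> linarith
  apply Summable.of_nat_of_neg <;> · simpa using hnat

lemma summable_gauss (σ : ℝ) (hσ : 0 < σ) (μ : ℤ) :
    Summable (fun h : ℤ => Real.exp (-((h : ℝ) - (μ : ℝ)) ^ 2 / (2 * σ ^ 2))) := by
  have := ((Equiv.subRight μ : ℤ ≃ ℤ).summable_iff
    (f := fun h : ℤ => Real.exp (-(h : ℝ) ^ 2 / (2 * σ ^ 2)))).mpr (summable_gauss_base σ hσ)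
  refine this.congr fun h => ?_
  simp only [Function.comp, Equiv.subRight_apply]
  push_cast
  ring_nf

lemma dgauss_nonneg (σ : ℝ) (μ z : ℤ) : 0 ≤ dgauss σ μ z := by
  unfold dgauss
  apply div_nonneg (Real.exp_pos _).le
  exact tsum_nonneg fun h => (Real.exp_pos _).le

lemma summable_dgauss (σ : ℝ) (hσ : 0 < σ) (μ : ℤ) : Summable (dgauss σ μ) := by
  unfold dgauss
  exact (summable_gauss σ hσ μ).div_const _

lemma dgauss_shift (σ : ℝ) (hσ : 0 < σ) (μ a w : ℤ) :
    dgauss σ (μ + a) w =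
      dgauss σ μ w * Real.exp ((2 * ((w : ℝ) - (μ : ℝ)) * (a : ℝ) - (a : ℝ) ^ 2) / (2 * σ ^ 2)) := by
  have hc : (2 * σ ^ 2 : ℝ) ≠ 0 := by positivity
  unfold dgauss
  have hden : (∑' h : ℤ, Real.exp (-((h : ℝ) - ((μ + a : ℤ) : ℝ)) ^ 2 / (2 * σ ^ 2))) =
      ∑' h : ℤ, Real.exp (-((h : ℝ) - (μ : ℝ)) ^ 2 / (2 * σ ^ 2)) := by
    rw [← (Equiv.subRight a : ℤ ≃ ℤ).tsum_eq
      (fun h : ℤ => Real.exp (-((h : ℝ) - (μ : ℝ)) ^ 2 / (2 * σ ^ 2)))]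
    refine tsum_congr fun h => ?_
    simp only [Equiv.subRight_apply]
    push_cast
    ring_nf
  rw [hden, div_mul_eq_mul_div]
  congr 1
  rw [← Real.exp_add]
  congr 1
  push_cast
  field_simp
  ring

set_option maxHeartbeats 1000000 in
lemma summable_prod_pi {d : ℕ} (g : Fin d → ℤ → ℝ) (hpos : ∀ i w, 0 ≤ g i w)
    (hs : ∀ i, Summable (g i)) :
    Summable (fun z : Fin d → ℤ => ∏ i, g i (z i)) := by
  induction d with
  | zero =>
      simp only [Finset.univ_eq_empty, Finset.prod_empty]
      exact Summable.of_finite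
  | succ n ih =>
      have ht : Summable (fun t : Fin n → ℤ => ∏ i : Fin n, g i.succ (t i)) :=
        ih (fun i => g i.succ) (fun i w => hpos _ _) (fun i => hs _)
      have base : Summable (fun p : ℤ × (Fin n → ℤ) =>
          g 0 p.1 * ∏ i : Fin n, g i.succ (p.2 i)) := by
        apply Summable.mul_of_nonneg (f := g 0)
          (g := fun t : Fin n → ℤ => ∏ i : Fin n, g i.succ (t i))
        · exact hs 0
        · exact ht
        · intro w; exact hpos _ _
        · intro t; exact Finset.prod_nonneg fun i _ => hpos _ _
      have hcomp : Summable ((fun z : Fin (n + 1) → ℤ => ∏ i, g i (z i)) ∘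
          (Fin.consEquiv (fun _ : Fin (n + 1) => ℤ))) := by
        refine base.congr fun p => ?_
        simp [Fin.consEquiv, Fin.prod_univ_succ]
      exact (Equiv.summable_iff _).mp hcomp

lemma dgaussProd_nonneg (σ : ℝ) (d : ℕ) (x z : Fin d → ℤ) : 0 ≤ dgaussProd σ d x z :=
  Finset.prod_nonneg fun i _ => dgauss_nonneg _ _ _

lemma summable_dgaussProd (σ : ℝ) (hσ : 0 < σ) (d : ℕ) (x : Fin d → ℤ) :
    Summable (dgaussProd σ d x) :=
  summable_prod_pi (fun i => dgauss σ (x i)) (fun i w => dgauss_nonneg _ _ _)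
    (fun i => summable_dgauss σ hσ (x i))

lemma dgaussProd_shift (σ : ℝ) (hσ : 0 < σ) (d : ℕ) (x δ z : Fin d → ℤ) :
    dgaussProd σ d (x + δ) z =
      dgaussProd σ d x z * Real.exp ((2 * iprod d (z - x) δ - nsq d δ) / (2 * σ ^ 2)) := by
  unfold dgaussProd
  have h1 : ∀ i : Fin d, dgauss σ ((x + δ) i) (z i) =
      dgauss σ (x i) (z i) *
        Real.exp ((2 * ((z i : ℝ) - (x i : ℝ)) * (δ i : ℝ) - (δ i : ℝ) ^ 2) / (2 * σ ^ 2)) := by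
    intro i
    have := dgauss_shift σ hσ (x i) (δ i) (z i)
    simpa using this
  rw [Finset.prod_congr rfl (fun i _ => h1 i), Finset.prod_mul_distrib, ← Real.exp_sum]
  congr 2
  rw [iprod, nsq, ← Finset.sum_div]
  congr 1
  rw [Finset.mul_sum, ← Finset.sum_sub_distrib]
  refine Finset.sum_congr rfl fun i _ => ?_
  simp only [Pi.sub_apply]
  push_cast
  ring

/-- Neyman-Pearson style core lemma. -/
lemma np_core {V : Type*} {p q : V → ℝ} (hp : ∀ z, 0 ≤ p z) (hq : ∀ z, 0 ≤ q z)
    (hps : Summable p) (hqs : Summable q) (S E : Set V) (ρ : ℝ) (hρ : 0 ≤ ρ)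
    (hin : ∀ z ∈ S \ E, q z ≤ ρ * p z) (hout : ∀ z ∈ E \ S, ρ * p z ≤ q z)
    (hX : ∑' z : S, p z ≤ ∑' z : E, p z) : ∑' z : S, q z ≤ ∑' z : E, q z := by
  have hsplit : ∀ (f : V → ℝ), Summable f → ∀ A B : Set V,
      ∑' z : A, f z = (∑' z : ↑(A ∩ B), f z) + ∑' z : ↑(A \ B), f z := by
    intro f hf A B
    have hd : Disjoint (A ∩ B) (A \ B) :=
      Set.disjoint_sdiff_right.mono_left Set.inter_subset_right
    conv_lhs => rw [← Set.inter_union_diff A B]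
    exact Summable.tsum_union_disjoint hd (hf.subtype _) (hf.subtype _)
  have hpE := hsplit p hps E S
  have hpS := hsplit p hps S E
  have hqE := hsplit q hqs E S
  have hqS := hsplit q hqs S E
  rw [Set.inter_comm E S] at hpE hqE
  have hpd : ∑' z : ↑(S \ E), p z ≤ ∑' z : ↑(E \ S), p z := by linarith
  have step1 : ∑' z : ↑(S \ E), q z ≤ ρ * ∑' z : ↑(S \ E), p z := by
    rw [← tsum_mul_left]
    exact Summable.tsum_le_tsum (fun z => hin z z.2) (hqs.subtype _) ((hps.subtype _).mul_left ρ)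
  have step2 : ρ * ∑' z : ↑(S \ E), p z ≤ ρ * ∑' z : ↑(E \ S), p z :=
    mul_le_mul_of_nonneg_left hpd hρ
  have step3 : ρ * ∑' z : ↑(E \ S), p z ≤ ∑' z : ↑(E \ S), q z := by
    rw [← tsum_mul_left]
    exact Summable.tsum_le_tsum (fun z => hout z z.2) ((hps.subtype _).mul_left ρ) (hqs.subtype _)
  linarith

end aux

/-- Certified robustness via integer randomized smoothing (half-space form). -/
theorem certified_robustness_intRS (σ : ℝ) (hσ : 0 < σ) (d : ℕ)
    {C : Type*} [Fintype C] (f : (Fin d → ℤ) → C)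
    (x δ : Fin d → ℤ) (cA : C) (tA tB : ℝ)
    (SA : Set (Fin d → ℤ)) (hSA : SA = {z | iprod d (z - x) δ ≤ tA})
    (SB : Set (Fin d → ℤ)) (hSB : SB = {z | iprod d (z - x) δ ≥ tB})
    (h1 : ∑' z : {z | f z = cA}, dgaussProd σ d x z ≥
          ∑' z : SA, dgaussProd σ d x z)
    (h2 : ∀ c : C, c ≠ cA →
          ∑' z : {z | f z = c}, dgaussProd σ d x z ≤
          ∑' z : SB, dgaussProd σ d x z)
    (h3 : ∑' z : SA, dgaussProd σ d (x + δ) z >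
          ∑' z : SB, dgaussProd σ d (x + δ) z) :
    ∀ c : C, c ≠ cA →
      ∑' z : {z | f z = cA}, dgaussProd σ d (x + δ) z >
      ∑' z : {z | f z = c}, dgaussProd σ d (x + δ) z := by
  intro c hc
  set pX : (Fin d → ℤ) → ℝ := dgaussProd σ d x with hpX
  set pY : (Fin d → ℤ) → ℝ := dgaussProd σ d (x + δ) with hpY
  have hc2 : (0:ℝ) < 2 * σ ^ 2 := by positivity
  have hkey : ∀ z, pY z = pX z * Real.exp ((2 * iprod d (z - x) δ - nsq d δ) / (2 * σ ^ 2)) :=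
    fun z => dgaussProd_shift σ hσ d x δ z
  have hXn : ∀ z, 0 ≤ pX z := fun z => dgaussProd_nonneg _ _ _ _
  have hYn : ∀ z, 0 ≤ pY z := fun z => dgaussProd_nonneg _ _ _ _
  have hXs : Summable pX := summable_dgaussProd σ hσ d x
  have hYs : Summable pY := summable_dgaussProd σ hσ d (x + δ)
  -- Step A : P_Y(SA) ≤ P_Y(f = cA)
  have stepA : ∑' z : SA, pY z ≤ ∑' z : {z | f z = cA}, pY z := by
    refine np_core hXn hYn hXs hYs SA {z | f z = cA}
      (Real.exp ((2 * tA - nsq d δ) / (2 * σ ^ 2))) (Real.exp_pos _).le ?_ ?_ h1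
    · intro z hz
      rw [hkey z, mul_comm _ (pX z)]
      apply mul_le_mul_of_nonneg_left _ (hXn z)
      apply Real.exp_le_exp.mpr
      have hzA : iprod d (z - x) δ ≤ tA := by
        have := hz.1; rw [hSA] at this; exact this
      gcongr <;> linarith
    · intro z hz
      rw [hkey z, mul_comm _ (pX z)]
      apply mul_le_mul_of_nonneg_left _ (hXn z)
      apply Real.exp_le_exp.mpr
      have hzA : tA < iprod d (z - x) δ := by
        have := hz.2; rw [hSA] at this
        exact lt_of_not_ge this
      gcongr <;> linarith
  -- Step B : P_Y(f = c) ≤ P_Y(SB)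
  have stepB : ∑' z : {z | f z = c}, pY z ≤ ∑' z : SB, pY z := by
    refine np_core hXn hYn hXs hYs {z | f z = c} SB
      (Real.exp ((2 * tB - nsq d δ) / (2 * σ ^ 2))) (Real.exp_pos _).le ?_ ?_ (h2 c hc)
    · intro z hz
      rw [hkey z, mul_comm _ (pX z)]
      apply mul_le_mul_of_nonneg_left _ (hXn z)
      apply Real.exp_le_exp.mpr
      have hzB : iprod d (z - x) δ < tB := by
        have := hz.2; rw [hSB] at this
        exact lt_of_not_ge this
      gcongr <;> linarith
    · intro z hz
      rw [hkey z, mul_comm _ (pX z)]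
      apply mul_le_mul_of_nonneg_left _ (hXn z)
      apply Real.exp_le_exp.mpr
      have hzB : tB ≤ iprod d (z - x) δ := by
        have := hz.1; rw [hSB] at this; exact this
      gcongr <;> linarith
  exact lt_of_le_of_lt stepB (lt_of_lt_of_le h3 stepA)
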